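/- Let C be a small category with a coverage τ. The assignments F ↦ Hom_Ĉ(−, F) and G ↦ (c ↦ G(y(c))) are mutually quasi-inverse functors establishing an equivalence between the category of τ-sheaves of sets on C and the full subcategory of presheaves of sets on Ĉ consisting of those τ̂-sheaves that are limit-preserving. (Set-valued incidence of the paper's equivalence Sh(C,τ) ≃ Sh_!(Ĉ,τ̂) induced by the adjunction y^* ⊣ y_*.) -/

import Mathlib

universe u

open CategoryTheory CategoryTheory.Limits Opposite

/-- A family of morphisms `{fᵢ : cᵢ ⟶ c}` indexed by a (small) set. -/
structure CoverFamily (C : Type u) [CategoryTheory.SmallCategory C] (c : C) : Type (u + 1) where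
  ι : Type u
  obj : ι → C
  map : ∀ i : ι, obj i ⟶ c

/-- A coverage (Grothendieck pretopology) in the sense of the paper:
identity families are coverings, and coverings admit weak pullbacks. -/
structure PaperCoverage (C : Type u) [CategoryTheory.SmallCategory C] : Type (u + 1) where
  covers : ∀ c : C, Set (CoverFamily C c)
  id_mem : ∀ c : C, (⟨PUnit, fun _ => c, fun _ => 𝟙 c⟩ : CoverFamily C c) ∈ covers c
  pullback_compat : ∀ {c c' : C} (g : c' ⟶ c) (fam : CoverFamily C c), fam ∈ covers c →
    ∃ fam' ∈ covers c', ∀ j : fam'.ι, ∃ (i : fam.ι) (h : fam'.obj j ⟶ fam.obj i),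
      h ≫ fam.map i = fam'.map j ≫ g

variable {C : Type u} [SmallCategory C]

/-- A morphism `π : Y ⟶ X` of presheaves is a `τ`-local epimorphism if every
morphism `y(c) ⟶ X` admits local lifts through `π` along some covering family of `c`. -/
def IsLocalEpi (τ : PaperCoverage C) {Y X : Cᵒᵖ ⥤ Type u} (π : Y ⟶ X) : Prop :=
  ∀ (c : C) (φ : yoneda.obj c ⟶ X),
    ∃ fam ∈ τ.covers c, ∀ j : fam.ι,
      ∃ φj : yoneda.obj (fam.obj j) ⟶ Y, φj ≫ π = yoneda.map (fam.map j) ≫ φ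

/-- The Mathlib coverage on `C` associated to a paper-style coverage `τ`:
its covering presieves are the presieves generated by the covering families of `τ`. -/
def PaperCoverage.toCoverage (τ : PaperCoverage C) : Coverage C where
  coverings c := { S | ∃ fam ∈ τ.covers c, S = Presieve.ofArrows fam.obj fam.map }
  pullback := by
    rintro c c' g S ⟨fam, hfam, rfl⟩
    obtain ⟨fam', hfam', H⟩ := τ.pullback_compat g fam hfam
    refine ⟨Presieve.ofArrows fam'.obj fam'.map, ⟨fam', hfam', rfl⟩, ?_⟩
    rintro Z h ⟨j⟩
    obtain ⟨i, k, hk⟩ := H j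
    exact ⟨fam.obj i, k, fam.map i, Presieve.ofArrows.mk i, hk⟩

/-- The Grothendieck topology on `C` generated by the coverage `τ`. -/
def PaperCoverage.topology (τ : PaperCoverage C) : GrothendieckTopology C :=
  τ.toCoverage.toGrothendieck

/-- The coverage `τ̂` on `Ĉ` whose covering families are the singleton families
`{π : Y ⟶ X}` with `π` a τ-local epimorphism. -/
def hatCoverage (τ : PaperCoverage C) : Coverage (Cᵒᵖ ⥤ Type u) where
  coverings X := { S | ∃ (Y : Cᵒᵖ ⥤ Type u) (π : Y ⟶ X),
    IsLocalEpi τ π ∧ S = Presieve.singleton π }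
  pullback := by
    rintro X Z g S ⟨Y, π, hπ, rfl⟩
    have hfst : IsLocalEpi τ (pullback.fst g π) := by
      intro c φ
      obtain ⟨fam, hfam, H⟩ := hπ c (φ ≫ g)
      refine ⟨fam, hfam, fun j => ?_⟩
      obtain ⟨φj, hφj⟩ := H j
      refine ⟨pullback.lift (yoneda.map (fam.map j) ≫ φ) φj ?_, ?_⟩
      · rw [Category.assoc, ← hφj]
      · exact pullback.lift_fst _ _ _
    refine ⟨Presieve.singleton (pullback.fst g π),
      ⟨pullback g π, pullback.fst g π, hfst, rfl⟩, ?_⟩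
    rintro W h ⟨⟩
    exact ⟨_, pullback.snd g π, π, Presieve.singleton.mk, pullback.condition.symm⟩

/-- The Grothendieck topology on `Ĉ` generated by the coverage `τ̂` of
τ-local epimorphisms. -/
def hatTopology (τ : PaperCoverage C) : GrothendieckTopology (Cᵒᵖ ⥤ Type u) :=
  (hatCoverage τ).toGrothendieck

/-- A presheaf of sets `G` on `Ĉ` is limit-preserving if it sends colimits in `Ĉ` to
limits in `Set`: for every small diagram `D`, the cone obtained by applying `G` to the
colimit cocone of `D` is a limit cone (i.e. the canonical map
`G(colim D) ⟶ lim G(D(j))` is a bijection). -/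
def LimitPreserving (G : (Cᵒᵖ ⥤ Type u)ᵒᵖ ⥤ Type u) : Prop :=
  ∀ (J : Type u) (_ : SmallCategory J) (D : J ⥤ Cᵒᵖ ⥤ Type u),
    Nonempty (IsLimit (G.mapCone (colimit.cocone D).op))

/-! ### Auxiliary lemmas for Statement 10 -/

section Aux

variable {τ : PaperCoverage C}

/-- Usable form of `LimitPreserving`: a limit-preserving presheaf on `Ĉ` turns *any*
colimit cocone into a limit cone. -/
noncomputable def LimitPreserving.isLimitMapConeOp {G : (Cᵒᵖ ⥤ Type u)ᵒᵖ ⥤ Type u}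
    (hG : LimitPreserving G) {J : Type u} [SmallCategory J] {D : J ⥤ Cᵒᵖ ⥤ Type u}
    {cc : Cocone D} (hcc : IsColimit cc) : IsLimit (G.mapCone cc.op) := by
  have : PreservesLimit D.op G :=
    preservesLimit_of_preserves_limit_cone (colimit.isColimit D).op (hG J inferInstance D).some
  exact isLimitOfPreserves G hcc.op

lemma limitPreserving_yoneda_obj (X : Cᵒᵖ ⥤ Type u) : LimitPreserving (yoneda.obj X) :=
  fun _ _ D => ⟨isLimitOfPreserves (yoneda.obj X) (colimit.isColimit D).op⟩

/-- Limit-preserving presheaves on `Ĉ` are "separated by representables". -/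
lemma LimitPreserving.ext_of_yoneda {G : (Cᵒᵖ ⥤ Type u)ᵒᵖ ⥤ Type u}
    (hG : LimitPreserving G) {Z : Cᵒᵖ ⥤ Type u} {a b : G.obj (op Z)}
    (h : ∀ (c : Cᵒᵖ) (ψ : yoneda.obj c.unop ⟶ Z), G.map ψ.op a = G.map ψ.op b) : a = b := by
  have hl := hG.isLimitMapConeOp (Presheaf.isColimitTautologicalCocone Z)
  apply (Types.isLimitEquivSections hl).injective
  ext j
  exact h (op j.unop.left) j.unop.hom

/-- The canonical comparison `G ⟶ Hom(−, G ∘ yᵒᵖ)`. -/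
noncomputable def alphaApp (G : (Cᵒᵖ ⥤ Type u)ᵒᵖ ⥤ Type u) :
    G ⟶ yoneda.obj (yoneda.op ⋙ G) where
  app X := ↾fun s =>
    { app := fun c => ↾fun x => G.map (yonedaEquiv.symm x).op s
      naturality := by
        intro c c' f
        ext x
        dsimp
        rw [yonedaEquiv_symm_map, op_comp, FunctorToTypes.map_comp_apply] }
  naturality X X' θ := by
    ext s
    apply NatTrans.ext
    funext c
    ext x
    dsimp
    rw [← yonedaEquiv_symm_naturality_right, op_comp, FunctorToTypes.map_comp_apply]
    rfl

lemma alphaApp_naturality {G G' : (Cᵒᵖ ⥤ Type u)ᵒᵖ ⥤ Type u} (ν : G ⟶ G') :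
    alphaApp G ≫ yoneda.map (Functor.whiskerLeft yoneda.op ν) = ν ≫ alphaApp G' := by
  apply NatTrans.ext
  funext X
  ext s
  apply NatTrans.ext
  funext c
  ext x
  exact (ConcreteCategory.congr_hom (ν.naturality (yonedaEquiv.symm x).op) s)

lemma alphaApp_bijective {G : (Cᵒᵖ ⥤ Type u)ᵒᵖ ⥤ Type u} (hG : LimitPreserving G)
    (X : (Cᵒᵖ ⥤ Type u)ᵒᵖ) : Function.Bijective ((alphaApp G).app X) := by
  constructor
  · intro a b hab
    refine hG.ext_of_yoneda (fun c ψ => ?_)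
    have := ConcreteCategory.congr_hom (congr_fun (congr_arg NatTrans.app hab) c) (yonedaEquiv ψ)
    dsimp [alphaApp] at this
    rwa [Equiv.symm_apply_apply] at this
  · intro θ
    have hl := hG.isLimitMapConeOp (Presheaf.isColimitTautologicalCocone X.unop)
    let e := Types.isLimitEquivSections hl
    have hsec : ∀ {j j' : (CostructuredArrow yoneda X.unop)ᵒᵖ} (φ : j ⟶ j'),
        G.map (yoneda.map φ.unop.left).op (θ.app (op j.unop.left) (yonedaEquiv j.unop.hom))
          = θ.app (op j'.unop.left) (yonedaEquiv j'.unop.hom) := by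
      intro j j' φ
      have h2 := θ.naturality_apply φ.unop.left.op (yonedaEquiv j.unop.hom)
      refine h2.symm.trans ?_
      rw [yonedaEquiv_naturality, CostructuredArrow.w φ.unop]
    refine ⟨e.symm ⟨fun j => θ.app (op j.unop.left) (yonedaEquiv j.unop.hom),
      fun φ => hsec φ⟩, ?_⟩
    apply NatTrans.ext
    funext c
    ext x
    have h3 := Types.isLimitEquivSections_symm_apply hl
      ⟨fun j => θ.app (op j.unop.left) (yonedaEquiv j.unop.hom), fun φ => hsec φ⟩
      (op (CostructuredArrow.mk (yonedaEquiv.symm x)))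
    exact h3.trans (congrArg (θ.app c) (Equiv.apply_symm_apply _ _))

/-- The comparison map as an isomorphism, for limit-preserving `G`. -/
noncomputable def alphaIso {G : (Cᵒᵖ ⥤ Type u)ᵒᵖ ⥤ Type u} (hG : LimitPreserving G) :
    G ≅ yoneda.obj (yoneda.op ⋙ G) := by
  have : ∀ X, IsIso ((alphaApp G).app X) :=
    fun X => (isIso_iff_bijective _).2 (alphaApp_bijective hG X)
  have : IsIso (alphaApp G) := NatIso.isIso_of_isIso_app _
  exact asIso (alphaApp G)

lemma alphaIso_hom {G : (Cᵒᵖ ⥤ Type u)ᵒᵖ ⥤ Type u} (hG : LimitPreserving G) :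
    (alphaIso hG).hom = alphaApp G := rfl

end Aux

section Aux2

variable {τ : PaperCoverage C}

/-- If `F` is a `τ`-sheaf then `Hom(−, F)` satisfies the sheaf condition for every
singleton presieve given by a `τ`-local epimorphism. -/
theorem isSheafFor_yoneda_singleton {F : Cᵒᵖ ⥤ Type u}
    (hF : Presieve.IsSheaf τ.topology F) {Y X : Cᵒᵖ ⥤ Type u} (π : Y ⟶ X)
    (hπ : IsLocalEpi τ π) :
    Presieve.IsSheafFor (yoneda.obj F) (Presieve.singleton π) := by
  have hFor : ∀ {c : C} (fam : CoverFamily C c), fam ∈ τ.covers c →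
      Presieve.IsSheafFor F (Presieve.ofArrows fam.obj fam.map) := fun fam hfam =>
    ((Presieve.isSheaf_coverage _ _).1 hF) _ ⟨fam, hfam, rfl⟩
  have hsep : ∀ {c : C} (fam : CoverFamily C c), fam ∈ τ.covers c →
      ∀ (u v : F.obj (op c)), (∀ i, F.map (fam.map i).op u = F.map (fam.map i).op v) →
        u = v := by
    intro c fam hfam u v h
    refine (hFor fam hfam).isSeparatedFor.ext (fun Z g hg => ?_)
    cases hg with | mk i => exact h i
  intro xfam hxfam
  set t : Y ⟶ F := xfam π Presieve.singleton.mk with ht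
  have htt : ∀ {W : Cᵒᵖ ⥤ Type u} (g₁ g₂ : W ⟶ Y), g₁ ≫ π = g₂ ≫ π → g₁ ≫ t = g₂ ≫ t :=
    fun g₁ g₂ h => hxfam g₁ g₂ Presieve.singleton.mk Presieve.singleton.mk h
  -- the local characterization of the amalgamation
  let Pp : ∀ (c : C), (yoneda.obj c ⟶ X) → F.obj (op c) → Prop := fun c φ u =>
    ∀ {c' : C} (g : c' ⟶ c) (ψ : yoneda.obj c' ⟶ Y), ψ ≫ π = yoneda.map g ≫ φ →
      F.map g.op u = yonedaEquiv (ψ ≫ t)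
  have huniq : ∀ (c : C) (φ : yoneda.obj c ⟶ X) (u v : F.obj (op c)),
      Pp c φ u → Pp c φ v → u = v := by
    intro c φ u v hu hv
    obtain ⟨fam, hfam, hl⟩ := hπ c φ
    refine hsep fam hfam u v (fun i => ?_)
    obtain ⟨φi, hφi⟩ := hl i
    rw [hu (fam.map i) φi hφi, hv (fam.map i) φi hφi]
  have hex : ∀ (c : C) (φ : yoneda.obj c ⟶ X), ∃ u, Pp c φ u := by
    intro c φ
    obtain ⟨fam, hfam, hl⟩ := hπ c φ
    choose φi hφi using hl
    have hcompat : Presieve.Arrows.Compatible F fam.map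
        (fun i => yonedaEquiv (φi i ≫ t)) := by
      intro i j Z g₁ g₂ hcomm
      rw [yonedaEquiv_naturality, yonedaEquiv_naturality]
      congr 1
      rw [← Category.assoc, ← Category.assoc]
      apply htt
      rw [Category.assoc, Category.assoc, hφi, hφi, ← Category.assoc, ← Category.assoc,
        ← Functor.map_comp, ← Functor.map_comp, hcomm]
    obtain ⟨u, hu, -⟩ := (Presieve.isSheafFor_arrows_iff _ _).1 (hFor fam hfam) _ hcompat
    refine ⟨u, ?_⟩
    intro c' g ψ hψ
    obtain ⟨fam', hfam', H⟩ := τ.pullback_compat g fam hfam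
    refine hsep fam' hfam' _ _ (fun j => ?_)
    obtain ⟨i, h, hh⟩ := H j
    have l1 : F.map (fam'.map j).op (F.map g.op u) =
        yonedaEquiv ((yoneda.map h ≫ φi i) ≫ t) := by
      rw [← FunctorToTypes.map_comp_apply, ← op_comp, ← hh, op_comp,
        FunctorToTypes.map_comp_apply, hu i, yonedaEquiv_naturality, Category.assoc]
    have l2 : F.map (fam'.map j).op (yonedaEquiv (ψ ≫ t)) =
        yonedaEquiv ((yoneda.map (fam'.map j) ≫ ψ) ≫ t) := by
      rw [yonedaEquiv_naturality, Category.assoc]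
    rw [l1, l2]
    congr 1
    apply htt
    rw [Category.assoc, Category.assoc, hφi i, hψ, ← Category.assoc, ← Category.assoc,
      ← Functor.map_comp, ← Functor.map_comp, hh]
  choose uFun hP using hex
  let s : X ⟶ F :=
    { app := fun c => ↾fun x => uFun c.unop (yonedaEquiv.symm x)
      naturality := by
        intro c c' f
        ext x
        dsimp
        refine huniq c'.unop (yonedaEquiv.symm ((X.map f) x)) _
          (F.map f (uFun c.unop (yonedaEquiv.symm x))) (hP _ _) ?_
        intro d g ψ hψ
        rw [yonedaEquiv_symm_map, ← Category.assoc, ← Functor.map_comp] at hψ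
        have h6 := hP c.unop (yonedaEquiv.symm x) (g ≫ f.unop) ψ hψ
        rw [op_comp, FunctorToTypes.map_comp_apply] at h6
        exact h6 }
  refine ⟨s, ?_, ?_⟩
  · rintro W f ⟨⟩
    show π ≫ s = t
    apply NatTrans.ext
    funext c
    ext ypt
    show uFun c.unop (yonedaEquiv.symm (π.app c ypt)) = t.app c ypt
    have e2 : yonedaEquiv.symm (π.app c ypt) = yonedaEquiv.symm ypt ≫ π :=
      (yonedaEquiv_symm_naturality_right _ π ypt).symm
    have h3 := hP c.unop (yonedaEquiv.symm (π.app c ypt)) (𝟙 c.unop) (yonedaEquiv.symm ypt)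
      (by rw [e2]; simp)
    rw [op_id, FunctorToTypes.map_id_apply] at h3
    rw [h3, yonedaEquiv_comp, Equiv.apply_symm_apply]
  · intro s' hs'
    have h4 : π ≫ s' = t := hs' π Presieve.singleton.mk
    apply NatTrans.ext
    funext c
    ext x
    refine huniq c.unop (yonedaEquiv.symm x) _ _ ?_ (hP _ _)
    intro d g ψ hψ
    have e5 : yonedaEquiv (yonedaEquiv.symm x ≫ s') = s'.app c x := by
      rw [yonedaEquiv_comp, Equiv.apply_symm_apply]
    calc F.map g.op (s'.app c x)
        = F.map g.op (yonedaEquiv (yonedaEquiv.symm x ≫ s')) := by rw [e5]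
      _ = yonedaEquiv (yoneda.map g ≫ yonedaEquiv.symm x ≫ s') := yonedaEquiv_naturality _ _
      _ = yonedaEquiv (ψ ≫ t) := by
          rw [← h4, ← Category.assoc, ← hψ, Category.assoc]

/-- If `F` is a `τ`-sheaf, then `Hom(−, F)` is a `τ̂`-sheaf. -/
theorem isSheaf_hat_yoneda {F : Cᵒᵖ ⥤ Type u} (hF : Presieve.IsSheaf τ.topology F) :
    Presieve.IsSheaf (hatTopology τ) (yoneda.obj F) := by
  apply (Presieve.isSheaf_coverage _ _).2
  rintro X S ⟨Y, π, hπ, rfl⟩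
  exact isSheafFor_yoneda_singleton hF π hπ

/-- The inclusion of the sieve generated by a covering family is a `τ`-local epi. -/
theorem isLocalEpi_functorInclusion (τ : PaperCoverage C) {c : C} {fam : CoverFamily C c}
    (hfam : fam ∈ τ.covers c) :
    IsLocalEpi τ (Sieve.generate (Presieve.ofArrows fam.obj fam.map)).functorInclusion := by
  intro c' φ
  set g := yonedaEquiv φ with hg
  have hφ : φ = yoneda.map g := by
    apply yonedaEquiv.injective
    rw [yonedaEquiv_yoneda_map]
  obtain ⟨fam', hfam', H⟩ := τ.pullback_compat g fam hfam
  choose idx hmap hcomp using H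
  refine ⟨fam', hfam', fun j => ?_⟩
  have hmem : ∀ {d : Cᵒᵖ} (k : d.unop ⟶ fam'.obj j),
      (Sieve.generate (Presieve.ofArrows fam.obj fam.map)) (k ≫ (fam'.map j ≫ g)) := by
    intro d k
    exact ⟨_, k ≫ hmap j, fam.map (idx j), Presieve.ofArrows.mk (idx j), by
      rw [Category.assoc, hcomp j, ← Category.assoc]⟩
  refine ⟨{ app := fun d => ↾fun k => ⟨k ≫ (fam'.map j ≫ g), hmem k⟩
            naturality := by
              intro d d' f
              ext k
              apply Subtype.ext
              dsimp
              exact Category.assoc _ _ _ }, ?_⟩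
  apply NatTrans.ext
  funext d
  ext k
  show k ≫ (fam'.map j ≫ g) = φ.app d (k ≫ fam'.map j)
  rw [hφ]
  dsimp
  rw [Category.assoc]

/-- Conversely: if `Hom(−, F)` is a `τ̂`-sheaf, then `F` is a `τ`-sheaf. -/
theorem isSheaf_of_yoneda_hat {F : Cᵒᵖ ⥤ Type u}
    (h : Presieve.IsSheaf (hatTopology τ) (yoneda.obj F)) :
    Presieve.IsSheaf τ.topology F := by
  apply (Presieve.isSheaf_coverage _ _).2
  rintro c S ⟨fam, hfam, rfl⟩
  rw [Presieve.isSheafFor_arrows_iff]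
  intro x hx
  have hfac : ∀ {d : C} (g : d ⟶ c),
      (Sieve.generate (Presieve.ofArrows fam.obj fam.map)) g →
      ∃ (i : fam.ι) (h : d ⟶ fam.obj i), h ≫ fam.map i = g := by
    rintro d g ⟨Z, k, g', hg', rfl⟩
    cases hg' with | mk i => exact ⟨i, k, rfl⟩
  set S₀ := Sieve.generate (Presieve.ofArrows fam.obj fam.map) with hS₀def
  let w : ∀ {d : Cᵒᵖ} (g : d.unop ⟶ c), S₀ g → F.obj d := fun {d} g hg =>
    F.map (hfac g hg).choose_spec.choose.op (x (hfac g hg).choose)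
  have hw : ∀ {d : Cᵒᵖ} (g : d.unop ⟶ c) (hg : S₀ g) (i : fam.ι) (k : d.unop ⟶ fam.obj i),
      k ≫ fam.map i = g → w g hg = F.map k.op (x i) := by
    intro d g hg i k hcomp
    exact hx _ i _ _ _ (by rw [(hfac g hg).choose_spec.choose_spec, hcomp])
  let tY : S₀.functor ⟶ F :=
    { app := fun d => ↾fun p => w p.1 p.2
      naturality := by
        intro d d' f
        ext p
        obtain ⟨i, k, hcomp⟩ := hfac p.1 p.2
        have e1 := hw p.1 p.2 i k hcomp
        have e2 := hw (f.unop ≫ p.1) (S₀.downward_closed p.2 f.unop) i (f.unop ≫ k)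
          (by rw [Category.assoc, hcomp])
        show w (f.unop ≫ p.1) (S₀.functor.map f p).2 = F.map f (w p.1 p.2)
        rw [e1, e2, op_comp, FunctorToTypes.map_comp_apply]
        rfl }
  have hsing : Presieve.IsSheafFor (yoneda.obj F)
      (Presieve.singleton S₀.functorInclusion) :=
    (Presieve.isSheaf_coverage _ _).1 h _
      ⟨_, _, isLocalEpi_functorInclusion τ hfam, rfl⟩
  let xs : Presieve.FamilyOfElements (yoneda.obj F)
      (Presieve.singleton S₀.functorInclusion) :=
    fun Z f hf => cast (by cases hf; rfl) tY
  have hxs : xs.Compatible := by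
    intro Z₁ Z₂ W g₁ g₂ f₁ f₂ h₁ h₂ hcomm
    cases h₁
    cases h₂
    have : g₁ = g₂ := by rwa [cancel_mono] at hcomm
    rw [this]
  obtain ⟨s, hs, hsu⟩ := hsing xs hxs
  have hamal : S₀.functorInclusion ≫ s = tY := hs _ Presieve.singleton.mk
  refine ⟨yonedaEquiv s, fun i => ?_, ?_⟩
  · have hmem : S₀ (fam.map i) :=
      ⟨_, 𝟙 _, fam.map i, Presieve.ofArrows.mk i, Category.id_comp _⟩
    have e1 : yoneda.map (fam.map i) =
        yonedaEquiv.symm (id ⟨fam.map i, hmem⟩ : S₀.functor.obj (op (fam.obj i))) ≫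
          S₀.functorInclusion := by
      apply yonedaEquiv.injective
      rw [yonedaEquiv_yoneda_map, yonedaEquiv_comp, Equiv.apply_symm_apply]
      rfl
    rw [yonedaEquiv_naturality, e1, Category.assoc, hamal, yonedaEquiv_comp,
      Equiv.apply_symm_apply]
    show w (fam.map i) hmem = x i
    rw [hw (fam.map i) hmem i (𝟙 _) (Category.id_comp _), op_id, FunctorToTypes.map_id_apply]
  · intro u' hu'
    have h5 : S₀.functorInclusion ≫ yonedaEquiv.symm u' = tY := by
      apply NatTrans.ext
      funext d
      ext p
      obtain ⟨i, k, hcomp⟩ := hfac p.1 p.2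
      show F.map p.1.op u' = tY.app d p
      calc F.map p.1.op u' = F.map k.op (F.map (fam.map i).op u') := by
            rw [← FunctorToTypes.map_comp_apply, ← op_comp, hcomp]
        _ = F.map k.op (x i) := by rw [hu' i]
        _ = tY.app d p := (hw p.1 p.2 i k hcomp).symm
    have h6 : yonedaEquiv.symm u' = s := hsu (yonedaEquiv.symm u') (by rintro Z f ⟨⟩; exact h5)
    apply yonedaEquiv.symm.injective
    rw [Equiv.symm_apply_apply]
    exact h6

end Aux2


/-- The Yoneda-lemma isomorphism `X ≅ yᵒᵖ ⋙ Hom(−, X)`, natural in `X`. -/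
noncomputable def yonedaUnitIso (X : Cᵒᵖ ⥤ Type u) : X ≅ yoneda.op ⋙ yoneda.obj X :=
  NatIso.ofComponents
    (fun c => Equiv.toIso (yonedaEquiv (X := c.unop) (F := X)).symm)
    (fun f => by
      ext x
      exact yonedaEquiv_symm_map f x)


/-- The assignments `F ↦ Hom_Ĉ(−, F)` and `G ↦ (c ↦ G(y(c)))` are
mutually quasi-inverse functors establishing an equivalence between the category of
τ-sheaves of sets on `C` and the full subcategory of presheaves of sets on `Ĉ` consisting
of the limit-preserving τ̂-sheaves. -/
theorem sheaves_equiv_limitPreserving_hatSheaves (τ : PaperCoverage C) :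
    ∃ e : ObjectProperty.FullSubcategory (fun F : Cᵒᵖ ⥤ Type u => Presieve.IsSheaf τ.topology F) ≌
        ObjectProperty.FullSubcategory (fun G : (Cᵒᵖ ⥤ Type u)ᵒᵖ ⥤ Type u =>
          Presieve.IsSheaf (hatTopology τ) G ∧ LimitPreserving G),
      (∀ F, Nonempty ((e.functor.obj F).obj ≅ yoneda.obj F.obj)) ∧
      (∀ G, Nonempty ((e.inverse.obj G).obj ≅ yoneda.op ⋙ G.obj)) := by
  classical
  let Φ : ObjectProperty.FullSubcategory (fun F : Cᵒᵖ ⥤ Type u => Presieve.IsSheaf τ.topology F) ⥤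
      ObjectProperty.FullSubcategory (fun G : (Cᵒᵖ ⥤ Type u)ᵒᵖ ⥤ Type u =>
        Presieve.IsSheaf (hatTopology τ) G ∧ LimitPreserving G) :=
    ObjectProperty.lift _ (ObjectProperty.ι _ ⋙ yoneda)
      (fun F => ⟨isSheaf_hat_yoneda F.2, limitPreserving_yoneda_obj F.obj⟩)
  let Ψ : ObjectProperty.FullSubcategory (fun G : (Cᵒᵖ ⥤ Type u)ᵒᵖ ⥤ Type u =>
        Presieve.IsSheaf (hatTopology τ) G ∧ LimitPreserving G) ⥤
      ObjectProperty.FullSubcategory (fun F : Cᵒᵖ ⥤ Type u => Presieve.IsSheaf τ.topology F) :=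
    ObjectProperty.lift _ (ObjectProperty.ι _ ⋙
        (Functor.whiskeringLeft Cᵒᵖ (Cᵒᵖ ⥤ Type u)ᵒᵖ (Type u)).obj yoneda.op)
      (fun G => isSheaf_of_yoneda_hat
        (Presieve.isSheaf_iso (hatTopology τ) (alphaIso G.2.2) G.2.1))
  refine ⟨CategoryTheory.Equivalence.mk Φ Ψ ?_ ?_, fun F => ⟨Iso.refl _⟩, fun G => ⟨Iso.refl _⟩⟩
  · refine NatIso.ofComponents (fun F =>
      ObjectProperty.isoMk _ (yonedaUnitIso F.obj)) ?_
    intro F F' σ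
    apply ObjectProperty.hom_ext
    apply NatTrans.ext
    funext c
    ext x
    show yonedaEquiv.symm (σ.hom.app c x) = yonedaEquiv.symm x ≫ σ.hom
    exact (yonedaEquiv_symm_naturality_right _ σ.hom x).symm
  · refine NatIso.ofComponents (fun G =>
      ObjectProperty.isoMk _ (alphaIso G.2.2).symm) ?_
    intro G G' ν
    apply ObjectProperty.hom_ext
    show yoneda.map (Functor.whiskerLeft yoneda.op ν.hom) ≫ (alphaIso G'.2.2).inv =
      (alphaIso G.2.2).inv ≫ ν.hom
    rw [Iso.comp_inv_eq, Category.assoc, alphaIso_hom G'.2.2, ← alphaApp_naturality ν.hom,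
      ← alphaIso_hom G.2.2, Iso.inv_hom_id_assoc]
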